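/- Let 0 < s₂ < s₁ < 1 < q < p < ∞, α < λ¹_{s₁,p} and β > 0. Then the functional I₊(u) = [u]_{s₁,p}^p/p + [u]_{s₂,q}^q/q - α‖u⁺‖_p^p/p - β‖u⁺‖_q^q/q is coercive on W₀^{s₁,p}(Ω): there exist constants c₁ > 0 and c₂ ≥ 0 such that I₊(u) ≥ c₁[u]_{s₁,p}^p - c₂ for all u ∈ W₀^{s₁,p}(Ω). In particular I₊ is bounded below. -/

import Mathlib

open MeasureTheory Real ENNReal

noncomputable section

abbrev Rd (d : ℕ) := EuclideanSpace ℝ (Fin d)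

/-- Gagliardo energy `∬ |u(x)-u(y)|^r / |x-y|^{d+sr} dx dy` as an `ℝ≥0∞`-valued integral. -/
def gEnergy (d : ℕ) (s r : ℝ) (u : Rd d → ℝ) : ℝ≥0∞ :=
  ∫⁻ x : Rd d, ∫⁻ y : Rd d,
    ENNReal.ofReal (|u x - u y| ^ r / ‖x - y‖ ^ ((d : ℝ) + s * r))

/-- Gagliardo seminorm `[u]_{s,r}`. -/
def gSemi (d : ℕ) (s r : ℝ) (u : Rd d → ℝ) : ℝ :=
  (gEnergy d s r u).toReal ^ (1 / r)

/-- Membership in `W₀^{s,r}(Ω)`: `u ∈ L^r`, finite Gagliardo energy, `u = 0` outside `Ω`. -/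
def memW0 (d : ℕ) (Ω : Set (Rd d)) (s r : ℝ) (u : Rd d → ℝ) : Prop :=
  MemLp u (ENNReal.ofReal r) volume ∧ gEnergy d s r u ≠ ⊤ ∧ ∀ x ∉ Ω, u x = 0

/-- The nonlocal energy form `⟨A_r(u), φ⟩` of the fractional `r`-Laplacian `(-Δ)^s_r`. -/
def formA (d : ℕ) (s r : ℝ) (u φ : Rd d → ℝ) : ℝ :=
  ∫ x : Rd d, ∫ y : Rd d,
    |u x - u y| ^ (r - 2) * (u x - u y) * (φ x - φ y) / ‖x - y‖ ^ ((d : ℝ) + s * r)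

/-- `u` is a weak solution of `(EV; α, β)`:
`(-Δ)^{s₁}_p u + (-Δ)^{s₂}_q u = α|u|^{p-2}u + β|u|^{q-2}u` in `Ω`, `u = 0` outside `Ω`. -/
def isWeakSol (d : ℕ) (Ω : Set (Rd d)) (s₁ s₂ p q α β : ℝ) (u : Rd d → ℝ) : Prop :=
  memW0 d Ω s₁ p u ∧ ∀ φ : Rd d → ℝ, memW0 d Ω s₁ p φ →
    formA d s₁ p u φ + formA d s₂ q u φ =
      α * ∫ x in Ω, |u x| ^ (p - 2) * u x * φ x +
        β * ∫ x in Ω, |u x| ^ (q - 2) * u x * φ x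

/-- The first Dirichlet eigenvalue `λ¹_{s,r}(Ω)` via the Rayleigh quotient. -/
def lam1 (d : ℕ) (Ω : Set (Rd d)) (s r : ℝ) : ℝ :=
  sInf {t : ℝ | ∃ u : Rd d → ℝ, memW0 d Ω s r u ∧
    (∫ x in Ω, |u x| ^ r) = 1 ∧ t = gSemi d s r u ^ r}

/-- The energy functional `I₊`. -/
def Iplus (d : ℕ) (Ω : Set (Rd d)) (s₁ s₂ p q α β : ℝ) (u : Rd d → ℝ) : ℝ :=
  gSemi d s₁ p u ^ p / p + gSemi d s₂ q u ^ q / q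
    - α * (∫ x in Ω, max (u x) 0 ^ p) / p - β * (∫ x in Ω, max (u x) 0 ^ q) / q

/-- Proposition 5.2 (coercivity): for `α < λ¹_{s₁,p}` and `β > 0`, the functional `I₊`
is coercive on `W₀^{s₁,p}(Ω)`: there are `c₁ > 0`, `c₂ ≥ 0` with
`I₊(u) ≥ c₁ [u]_{s₁,p}^p - c₂` for all `u ∈ W₀^{s₁,p}(Ω)`; in particular `I₊` is
bounded below. -/

lemma gSemi_nonneg (d : ℕ) (s r : ℝ) (u : Rd d → ℝ) : 0 ≤ gSemi d s r u :=
  Real.rpow_nonneg ENNReal.toReal_nonneg _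

lemma gEnergy_const_mul (d : ℕ) (s r : ℝ) (c : ℝ) (hc : 0 ≤ c) (u : Rd d → ℝ) :
    gEnergy d s r (fun x => c * u x) = ENNReal.ofReal (c ^ r) * gEnergy d s r u := by
  have h : ∀ x y : Rd d,
      ENNReal.ofReal (|c * u x - c * u y| ^ r / ‖x - y‖ ^ ((d : ℝ) + s * r)) =
      ENNReal.ofReal (c ^ r) *
        ENNReal.ofReal (|u x - u y| ^ r / ‖x - y‖ ^ ((d : ℝ) + s * r)) := by
    intro x y
    rw [← ENNReal.ofReal_mul (by positivity), ← mul_div_assoc,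
      ← Real.mul_rpow hc (abs_nonneg _), ← mul_sub, abs_mul, abs_of_nonneg hc]
  unfold gEnergy
  simp only [h]
  rw [← MeasureTheory.lintegral_const_mul' _ _ ENNReal.ofReal_ne_top]
  exact lintegral_congr fun x => lintegral_const_mul' _ _ ENNReal.ofReal_ne_top

lemma rpow_one_div_rpow (p X : ℝ) (hp : 0 < p) (hX : 0 ≤ X) : (X ^ (1 / p)) ^ p = X := by
  rw [← Real.rpow_mul hX, one_div, inv_mul_cancel₀ hp.ne', Real.rpow_one]

lemma poincare (d : ℕ) (Ω : Set (Rd d)) (s p : ℝ) (hp : 0 < p) (u : Rd d → ℝ)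
    (hu : memW0 d Ω s p u) :
    lam1 d Ω s p * (∫ x in Ω, |u x| ^ p) ≤ gSemi d s p u ^ p := by
  set T := ∫ x in Ω, |u x| ^ p with hT
  have hT0 : 0 ≤ T := integral_nonneg fun x => Real.rpow_nonneg (abs_nonneg _) _
  rcases eq_or_lt_of_le hT0 with h0 | hTpos
  · rw [← h0, mul_zero]
    exact Real.rpow_nonneg (gSemi_nonneg _ _ _ _) _
  · set c := T ^ (-(1 / p)) with hc
    have hcpos : 0 < c := Real.rpow_pos_of_pos hTpos _
    have hcp : c ^ p = T⁻¹ := by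
      rw [hc, ← Real.rpow_mul hT0, neg_mul, one_div, inv_mul_cancel₀ hp.ne',
        Real.rpow_neg_one]
    set v : Rd d → ℝ := fun x => c * u x with hv
    have hEv : gEnergy d s p v = ENNReal.ofReal (c ^ p) * gEnergy d s p u :=
      gEnergy_const_mul d s p c hcpos.le u
    have hvmem : memW0 d Ω s p v := by
      refine ⟨hu.1.const_mul c, ?_, fun x hx => by simp [hv, hu.2.2 x hx]⟩
      rw [hEv]
      exact ENNReal.mul_ne_top ENNReal.ofReal_ne_top hu.2.1
    have hvint : (∫ x in Ω, |v x| ^ p) = 1 := by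
      have habs : ∀ x : Rd d, |v x| ^ p = c ^ p * |u x| ^ p := fun x => by
        rw [hv, abs_mul, abs_of_nonneg hcpos.le, Real.mul_rpow hcpos.le (abs_nonneg _)]
      simp only [habs]
      rw [MeasureTheory.integral_const_mul, ← hT, hcp, inv_mul_cancel₀ hTpos.ne']
    have hsemi : gSemi d s p v ^ p = c ^ p * gSemi d s p u ^ p := by
      unfold gSemi
      rw [hEv, ENNReal.toReal_mul, ENNReal.toReal_ofReal (by positivity),
        rpow_one_div_rpow p _ hp (by positivity),
        rpow_one_div_rpow p _ hp ENNReal.toReal_nonneg]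
    have hbdd : BddBelow {t : ℝ | ∃ w : Rd d → ℝ, memW0 d Ω s p w ∧
        (∫ x in Ω, |w x| ^ p) = 1 ∧ t = gSemi d s p w ^ p} := by
      refine ⟨0, fun t ht => ?_⟩
      obtain ⟨w, -, -, rfl⟩ := ht
      exact Real.rpow_nonneg (gSemi_nonneg _ _ _ _) _
    have hle : lam1 d Ω s p ≤ gSemi d s p v ^ p :=
      csInf_le hbdd ⟨v, hvmem, hvint, rfl⟩
    have := mul_le_mul_of_nonneg_right hle hT0
    rw [hsemi, hcp] at this
    calc lam1 d Ω s p * T ≤ T⁻¹ * gSemi d s p u ^ p * T := this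
      _ = gSemi d s p u ^ p := by field_simp
      _ ≤ gSemi d s p u ^ p := le_refl _

lemma rpow_young (p q M t : ℝ) (hq : 0 ≤ q) (hpq : q < p) (hM : 0 < M) (ht : 0 ≤ t) :
    t ^ q ≤ M ^ (q - p) * t ^ p + M ^ q := by
  rcases le_total t M with h | h
  · have h1 : t ^ q ≤ M ^ q := Real.rpow_le_rpow ht h hq
    have h2 : 0 ≤ M ^ (q - p) * t ^ p := by positivity
    linarith
  · have htpos : 0 < t := lt_of_lt_of_le hM h
    have h1 : t ^ q = t ^ p * t ^ (q - p) := by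
      rw [← Real.rpow_add htpos]; congr 1; ring
    have h2 : t ^ (q - p) ≤ M ^ (q - p) :=
      Real.rpow_le_rpow_of_nonpos hM h (by linarith)
    have h3 : 0 ≤ M ^ q := by positivity
    have h4 : 0 ≤ t ^ p := Real.rpow_nonneg ht _
    nlinarith [mul_le_mul_of_nonneg_left h2 h4]

lemma int_pos_part_le (d : ℕ) (Ω : Set (Rd d)) (r : ℝ) (hr : 0 < r) (u : Rd d → ℝ)
    (hint : Integrable (fun x => |u x| ^ r) (volume.restrict Ω)) :
    (∫ x in Ω, max (u x) 0 ^ r) ≤ ∫ x in Ω, |u x| ^ r :=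
  integral_mono_of_nonneg
    (Filter.Eventually.of_forall fun x => Real.rpow_nonneg (le_max_right _ _) _) hint
    (Filter.Eventually.of_forall fun x =>
      Real.rpow_le_rpow (le_max_right _ _) (max_le (le_abs_self _) (abs_nonneg _)) hr.le)

theorem Iplus_coercive
    (d : ℕ) (Ω : Set (Rd d)) (s₁ s₂ p q α β : ℝ)
    (hs₂ : 0 < s₂) (hs : s₂ < s₁) (hs₁ : s₁ < 1) (hq : 1 < q) (hpq : q < p)
    (hΩo : IsOpen Ω) (hΩb : Bornology.IsBounded Ω)
    (hα : α < lam1 d Ω s₁ p) (hβ : 0 < β)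
    -- continuity of the embedding W₀^{s₁,p}(Ω) ↪ L^q(Ω)
    (hemb : ∃ C : ℝ, 0 < C ∧ ∀ u : Rd d → ℝ, memW0 d Ω s₁ p u →
      (∫ x in Ω, |u x| ^ q) ^ (1 / q) ≤ C * gSemi d s₁ p u) :
    ∃ c₁ : ℝ, 0 < c₁ ∧ ∃ c₂ : ℝ, 0 ≤ c₂ ∧ ∀ u : Rd d → ℝ, memW0 d Ω s₁ p u →
      c₁ * gSemi d s₁ p u ^ p - c₂ ≤ Iplus d Ω s₁ s₂ p q α β u := by
  obtain ⟨C, hC, hCemb⟩ := hemb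
  have hq0 : (0 : ℝ) < q := lt_trans one_pos hq
  have hp0 : (0 : ℝ) < p := lt_trans hq0 hpq
  haveI : IsFiniteMeasure (volume.restrict Ω) :=
    ⟨by rw [Measure.restrict_apply_univ]; exact hΩb.measure_lt_top⟩
  -- integrability of |u|^p and |u|^q on Ω
  have hintp : ∀ u : Rd d → ℝ, memW0 d Ω s₁ p u →
      Integrable (fun x => |u x| ^ p) (volume.restrict Ω) := by
    intro u hu
    have h := hu.1.integrable_norm_rpow (ENNReal.ofReal_pos.mpr hp0).ne' ENNReal.ofReal_ne_top
    rw [ENNReal.toReal_ofReal hp0.le] at h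
    simpa [Real.norm_eq_abs] using h.restrict (s := Ω)
  have hintq : ∀ u : Rd d → ℝ, memW0 d Ω s₁ p u →
      Integrable (fun x => |u x| ^ q) (volume.restrict Ω) := by
    intro u hu
    have hm : MemLp u (ENNReal.ofReal q) (volume.restrict Ω) :=
      (hu.1.restrict Ω).mono_exponent (ENNReal.ofReal_le_ofReal hpq.le)
    have h := hm.integrable_norm_rpow (ENNReal.ofReal_pos.mpr hq0).ne' ENNReal.ofReal_ne_top
    rw [ENNReal.toReal_ofReal hq0.le] at h
    simpa [Real.norm_eq_abs] using h
  -- the coefficient a < 1 controlling the α term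
  have key : ∃ a : ℝ, a < 1 ∧ ∀ u : Rd d → ℝ, memW0 d Ω s₁ p u →
      α * (∫ x in Ω, max (u x) 0 ^ p) ≤ a * gSemi d s₁ p u ^ p := by
    by_cases hα0 : α ≤ 0
    · refine ⟨0, one_pos, fun u hu => ?_⟩
      rw [zero_mul]
      exact mul_nonpos_of_nonpos_of_nonneg hα0
        (integral_nonneg fun x => Real.rpow_nonneg (le_max_right _ _) _)
    · push_neg at hα0
      have hlam : 0 < lam1 d Ω s₁ p := lt_trans hα0 hα
      refine ⟨α / lam1 d Ω s₁ p, (div_lt_one hlam).mpr hα, fun u hu => ?_⟩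
      have h1 : (∫ x in Ω, max (u x) 0 ^ p) ≤ ∫ x in Ω, |u x| ^ p :=
        int_pos_part_le d Ω p hp0 u (hintp u hu)
      have h2 := poincare d Ω s₁ p hp0 u hu
      calc α * (∫ x in Ω, max (u x) 0 ^ p) ≤ α * ∫ x in Ω, |u x| ^ p :=
            mul_le_mul_of_nonneg_left h1 hα0.le
        _ = (α / lam1 d Ω s₁ p) * (lam1 d Ω s₁ p * ∫ x in Ω, |u x| ^ p) := by
            field_simp
        _ ≤ (α / lam1 d Ω s₁ p) * gSemi d s₁ p u ^ p :=
            mul_le_mul_of_nonneg_left h2 (by positivity)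
  obtain ⟨a, ha1, ha⟩ := key
  set B : ℝ := β * C ^ q / q with hBdef
  have hBpos : 0 < B := by positivity
  set c₁ : ℝ := (1 - a) / (2 * p) with hc₁def
  have hc₁pos : 0 < c₁ := by
    apply div_pos (by linarith) (by linarith)
  set M : ℝ := max 1 ((B / c₁) ^ (1 / (p - q))) with hMdef
  have hM : 0 < M := lt_of_lt_of_le one_pos (le_max_left _ _)
  have hMpq : 0 < M ^ (p - q) := Real.rpow_pos_of_pos hM _
  have hM1 : B * M ^ (q - p) ≤ c₁ := by
    have h5 : (B / c₁) ^ (1 / (p - q)) ≤ M := le_max_right _ _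
    have h6 : B / c₁ ≤ M ^ (p - q) := by
      calc B / c₁ = ((B / c₁) ^ (1 / (p - q))) ^ (p - q) := by
            rw [rpow_one_div_rpow _ _ (by linarith) (by positivity)]
        _ ≤ M ^ (p - q) := Real.rpow_le_rpow (by positivity) h5 (by linarith)
    have h6' : B ≤ c₁ * M ^ (p - q) := by
      rw [div_le_iff₀ hc₁pos] at h6; linarith
    have h7 : M ^ (q - p) = (M ^ (p - q))⁻¹ := by
      rw [← Real.rpow_neg hM.le, neg_sub]
    rw [h7, ← div_eq_mul_inv, div_le_iff₀ hMpq]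
    linarith
  refine ⟨c₁, hc₁pos, B * M ^ q, by positivity, fun u hu => ?_⟩
  set S : ℝ := gSemi d s₁ p u with hSdef
  have hS0 : 0 ≤ S := gSemi_nonneg _ _ _ _
  have hSp : 0 ≤ S ^ p := Real.rpow_nonneg hS0 _
  set X : ℝ := ∫ x in Ω, max (u x) 0 ^ p with hXdef
  set Y : ℝ := ∫ x in Ω, max (u x) 0 ^ q with hYdef
  -- bound on the β term
  have hIq0 : 0 ≤ ∫ x in Ω, |u x| ^ q :=
    integral_nonneg fun x => Real.rpow_nonneg (abs_nonneg _) _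
  have hY : Y ≤ C ^ q * S ^ q := by
    have h1 : Y ≤ ∫ x in Ω, |u x| ^ q := int_pos_part_le d Ω q hq0 u (hintq u hu)
    have h2 : (∫ x in Ω, |u x| ^ q) ≤ C ^ q * S ^ q := by
      have h3 := Real.rpow_le_rpow (Real.rpow_nonneg hIq0 _) (hCemb u hu) hq0.le
      rw [rpow_one_div_rpow q _ hq0 hIq0, Real.mul_rpow hC.le hS0] at h3
      exact h3
    linarith
  have hYq : β * Y / q ≤ B * S ^ q := by
    calc β * Y / q ≤ β * (C ^ q * S ^ q) / q := by
          apply div_le_div_of_nonneg_right ?_ hq0.le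
          · exact mul_le_mul_of_nonneg_left hY hβ.le
      _ = B * S ^ q := by rw [hBdef]; ring
  have hYoung : S ^ q ≤ M ^ (q - p) * S ^ p + M ^ q :=
    rpow_young p q M S hq0.le hpq hM hS0
  have hB2 : B * S ^ q ≤ B * M ^ (q - p) * S ^ p + B * M ^ q := by
    have := mul_le_mul_of_nonneg_left hYoung hBpos.le
    nlinarith
  have hB3 : B * M ^ (q - p) * S ^ p ≤ c₁ * S ^ p := mul_le_mul_of_nonneg_right hM1 hSp
  have hA : α * X / p ≤ a * S ^ p / p :=
    div_le_div_of_nonneg_right (ha u hu) hp0.le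
  have hE2 : S ^ p / p - a * S ^ p / p = 2 * (c₁ * S ^ p) := by
    rw [hc₁def]; field_simp
  have hS2 : 0 ≤ gSemi d s₂ q u ^ q / q :=
    div_nonneg (Real.rpow_nonneg (gSemi_nonneg _ _ _ _) _) hq0.le
  rw [Iplus]
  rw [← hSdef, ← hXdef, ← hYdef]
  linarith


end
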